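/- Let R be a square in ℂ, let A ⊆ R be a nonempty closed subset, and let F be a family of squares contained in R such that for every a ∈ A there is a δ > 0 such that every square S ⊆ R with a ∈ S and diam(S) < δ belongs to F. Then there exists a finite subfamily G ⊆ F whose members have pairwise disjoint interiors and whose union covers A. -/

import Mathlib

open Set

def closedSquare (x y s : ℝ) : Set ℂ :=
  {z : ℂ | z.re ∈ Icc x (x + s) ∧ z.im ∈ Icc y (y + s)}

section aux
variable {A : Set ℂ} {F : Set (Set ℂ)}

/-- auxiliary: a good finite subfamily for the piece `U`, with interiors inside `D`. -/
def GoodIn (A : Set ℂ) (F : Set (Set ℂ)) (U D : Set ℂ) : Prop :=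
  ∃ G, G ⊆ F ∧ G.Finite ∧ (G.Pairwise fun S T => Disjoint (interior S) (interior T)) ∧
    A ∩ U ⊆ ⋃₀ G ∧ ∀ S ∈ G, S ⊆ U ∧ interior S ⊆ D

lemma GoodIn.combine {U V D E : Set ℂ} (h1 : GoodIn A F U D) (h2 : GoodIn A F V E)
    (hDE : Disjoint D E) : GoodIn A F (U ∪ V) (D ∪ E) := by
  obtain ⟨G1, hG1F, hG1fin, hG1pw, hG1cov, hG1sub⟩ := h1
  obtain ⟨G2, hG2F, hG2fin, hG2pw, hG2cov, hG2sub⟩ := h2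
  refine ⟨G1 ∪ G2, union_subset hG1F hG2F, hG1fin.union hG2fin, ?_, ?_, ?_⟩
  · intro S hS T hT hne
    rcases hS with hS | hS <;> rcases hT with hT | hT
    · exact hG1pw hS hT hne
    · exact hDE.mono (hG1sub S hS).2 (hG2sub T hT).2
    · exact (hDE.mono (hG1sub T hT).2 (hG2sub S hS).2).symm
    · exact hG2pw hS hT hne
  · rintro z ⟨hzA, hzU | hzV⟩
    · exact sUnion_mono subset_union_left (hG1cov ⟨hzA, hzU⟩)
    · exact sUnion_mono subset_union_right (hG2cov ⟨hzA, hzV⟩)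
  · rintro S (hS | hS)
    · exact ⟨(hG1sub S hS).1.trans subset_union_left, (hG1sub S hS).2.trans subset_union_left⟩
    · exact ⟨(hG2sub S hS).1.trans subset_union_right, (hG2sub S hS).2.trans subset_union_right⟩

lemma GoodIn.mono_D {U D D' : Set ℂ} (h : GoodIn A F U D) (hD : D ⊆ D') : GoodIn A F U D' := by
  obtain ⟨G, h1, h2, h3, h4, h5⟩ := h
  exact ⟨G, h1, h2, h3, h4, fun S hS => ⟨(h5 S hS).1, (h5 S hS).2.trans hD⟩⟩

lemma goodIn_of_empty {U D : Set ℂ} (h : A ∩ U = ∅) : GoodIn A F U D :=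
  ⟨∅, empty_subset _, finite_empty, pairwise_empty _, by rw [h]; exact (sUnion_empty ▸ Subset.rfl),
    fun S hS => absurd hS (notMem_empty S)⟩

lemma goodIn_of_mem {U : Set ℂ} (h : U ∈ F) : GoodIn A F U (interior U) :=
  ⟨{U}, singleton_subset_iff.mpr h, finite_singleton U, pairwise_singleton _ _,
    fun z hz => ⟨U, mem_singleton U, hz.2⟩,
    fun S hS => by rw [mem_singleton_iff] at hS; subst hS; exact ⟨Subset.rfl, Subset.rfl⟩⟩

end aux

lemma mem_cs {x y s : ℝ} {z : ℂ} :
    z ∈ closedSquare x y s ↔ (x ≤ z.re ∧ z.re ≤ x + s) ∧ (y ≤ z.im ∧ z.im ≤ y + s) := by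
  simp [closedSquare, mem_Icc]

lemma isClosed_cs (x y s : ℝ) : IsClosed (closedSquare x y s) :=
  ((isClosed_Icc.preimage Complex.continuous_re).inter
    (isClosed_Icc.preimage Complex.continuous_im))

lemma dist_le_cs {x y s : ℝ} {a b : ℂ} (ha : a ∈ closedSquare x y s)
    (hb : b ∈ closedSquare x y s) : dist a b ≤ 2 * s := by
  rw [mem_cs] at ha hb
  rw [Complex.dist_eq]
  calc ‖a - b‖ ≤ |(a-b).re| + |(a-b).im| := Complex.norm_le_abs_re_add_abs_im _
    _ ≤ s + s := by
        apply add_le_add <;> rw [abs_le] <;> simp only [Complex.sub_re, Complex.sub_im] <;>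
          constructor <;> linarith [ha.1.1, ha.1.2, ha.2.1, ha.2.2, hb.1.1, hb.1.2, hb.2.1, hb.2.2]
    _ = 2 * s := by ring

lemma diam_cs_le {s : ℝ} (hs : 0 ≤ s) (x y : ℝ) : Metric.diam (closedSquare x y s) ≤ 2 * s :=
  Metric.diam_le_of_forall_dist_le (by linarith) fun a ha b hb => dist_le_cs ha hb

lemma interior_cs_subset (x y s : ℝ) :
    interior (closedSquare x y s) ⊆
      {z : ℂ | (x < z.re ∧ z.re < x + s) ∧ (y < z.im ∧ z.im < y + s)} := by
  have h : closedSquare x y s =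
      Complex.equivRealProdCLM.toHomeomorph ⁻¹' (Icc x (x+s) ×ˢ Icc y (y+s)) := rfl
  rw [h, ← Homeomorph.preimage_interior, interior_prod_eq, interior_Icc, interior_Icc]
  intro z hz
  exact ⟨hz.1, hz.2⟩

lemma cs_disjoint {x y x' y' s s' : ℝ}
    (h : x + s ≤ x' ∨ x' + s' ≤ x ∨ y + s ≤ y' ∨ y' + s' ≤ y) :
    Disjoint (interior (closedSquare x y s)) (interior (closedSquare x' y' s')) := by
  rw [Set.disjoint_left]
  intro z hz hz'
  have h1 := interior_cs_subset x y s hz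
  have h2 := interior_cs_subset x' y' s' hz'
  simp only [mem_setOf_eq] at h1 h2
  rcases h with h | h | h | h <;>
    linarith [h1.1.1, h1.1.2, h1.2.1, h1.2.2, h2.1.1, h2.1.2, h2.2.1, h2.2.2]

/-- dyadic square at level n, position (i,j) -/
def dyQ (x₀ y₀ s₀ : ℝ) (n i j : ℕ) : Set ℂ :=
  closedSquare (x₀ + i * (s₀ / 2 ^ n)) (y₀ + j * (s₀ / 2 ^ n)) (s₀ / 2 ^ n)

lemma dyQ_disjoint {x₀ y₀ s₀ : ℝ} (hs₀ : 0 < s₀) {n i j i' j' : ℕ}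
    (h : i ≠ i' ∨ j ≠ j') :
    Disjoint (interior (dyQ x₀ y₀ s₀ n i j)) (interior (dyQ x₀ y₀ s₀ n i' j')) := by
  have hc : (0:ℝ) < s₀ / 2 ^ n := by positivity
  apply cs_disjoint
  rcases h with h | h
  · rcases lt_or_gt_of_ne h with h | h
    · left
      have : (i:ℝ) + 1 ≤ i' := by exact_mod_cast h
      nlinarith
    · right; left
      have : (i':ℝ) + 1 ≤ i := by exact_mod_cast h
      nlinarith
  · rcases lt_or_gt_of_ne h with h | h
    · right; right; left
      have : (j:ℝ) + 1 ≤ j' := by exact_mod_cast h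
      nlinarith
    · right; right; right
      have : (j':ℝ) + 1 ≤ j := by exact_mod_cast h
      nlinarith

lemma dyQ_subset {x₀ y₀ s₀ : ℝ} (hs₀ : 0 < s₀) {n i j : ℕ} (hi : i < 2 ^ n) (hj : j < 2 ^ n) :
    dyQ x₀ y₀ s₀ n i j ⊆ closedSquare x₀ y₀ s₀ := by
  intro z hz
  rw [dyQ, mem_cs] at hz
  rw [mem_cs]
  have hc : (0:ℝ) < s₀ / 2 ^ n := by positivity
  have hi' : ((i:ℝ) + 1) * (s₀ / 2 ^ n) ≤ s₀ := by
    have : ((i:ℝ) + 1) ≤ 2 ^ n := by exact_mod_cast hi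
    calc ((i:ℝ) + 1) * (s₀ / 2 ^ n) ≤ 2 ^ n * (s₀ / 2 ^ n) :=
          mul_le_mul_of_nonneg_right this hc.le
      _ = s₀ := by field_simp
  have hj' : ((j:ℝ) + 1) * (s₀ / 2 ^ n) ≤ s₀ := by
    have : ((j:ℝ) + 1) ≤ 2 ^ n := by exact_mod_cast hj
    calc ((j:ℝ) + 1) * (s₀ / 2 ^ n) ≤ 2 ^ n * (s₀ / 2 ^ n) :=
          mul_le_mul_of_nonneg_right this hc.le
      _ = s₀ := by field_simp
  have hi0 : (0:ℝ) ≤ (i:ℝ) * (s₀ / 2 ^ n) := by positivity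
  have hj0 : (0:ℝ) ≤ (j:ℝ) * (s₀ / 2 ^ n) := by positivity
  obtain ⟨⟨a1, a2⟩, a3, a4⟩ := hz
  refine ⟨⟨by linarith, by nlinarith⟩, by linarith, by nlinarith⟩

lemma dyQ_child_subset {x₀ y₀ s₀ : ℝ} (hs₀ : 0 < s₀) {n i j a b : ℕ} (ha : a ≤ 1) (hb : b ≤ 1) :
    dyQ x₀ y₀ s₀ (n+1) (2*i+a) (2*j+b) ⊆ dyQ x₀ y₀ s₀ n i j := by
  intro z hz
  rw [dyQ, mem_cs] at hz ⊢
  have hc : (0:ℝ) < s₀ / 2 ^ (n+1) := by positivity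
  have hcc : s₀ / 2 ^ n = 2 * (s₀ / 2 ^ (n+1)) := by
    rw [pow_succ]; ring
  have ha' : (a:ℝ) ≤ 1 := by exact_mod_cast ha
  have hb' : (b:ℝ) ≤ 1 := by exact_mod_cast hb
  have e1 : ((2*i+a : ℕ) : ℝ) = 2 * i + a := by push_cast; ring
  have e2 : ((2*j+b : ℕ) : ℝ) = 2 * j + b := by push_cast; ring
  rw [e1, e2] at hz
  obtain ⟨⟨a1, a2⟩, a3, a4⟩ := hz
  refine ⟨⟨by nlinarith, by nlinarith⟩, by nlinarith, by nlinarith⟩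

lemma dyQ_eq_union {x₀ y₀ s₀ : ℝ} (hs₀ : 0 < s₀) (n i j : ℕ) :
    dyQ x₀ y₀ s₀ n i j =
      (dyQ x₀ y₀ s₀ (n+1) (2*i) (2*j) ∪ dyQ x₀ y₀ s₀ (n+1) (2*i) (2*j+1)) ∪
      (dyQ x₀ y₀ s₀ (n+1) (2*i+1) (2*j) ∪ dyQ x₀ y₀ s₀ (n+1) (2*i+1) (2*j+1)) := by
  apply Subset.antisymm
  · intro z hz
    rw [dyQ, mem_cs] at hz
    have hcc : s₀ / 2 ^ n = 2 * (s₀ / 2 ^ (n+1)) := by rw [pow_succ]; ring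
    set h := s₀ / 2 ^ (n+1) with hh
    obtain ⟨⟨a1, a2⟩, a3, a4⟩ := hz
    have key : ∀ (a b : ℕ), a ≤ 1 → b ≤ 1 →
        (x₀ + (2*i+a) * h ≤ z.re ∧ z.re ≤ x₀ + (2*i+a) * h + h) →
        (y₀ + (2*j+b) * h ≤ z.im ∧ z.im ≤ y₀ + (2*j+b) * h + h) →
        z ∈ dyQ x₀ y₀ s₀ (n+1) (2*i+a) (2*j+b) := by
      intro a b _ _ h1 h2
      rw [dyQ, mem_cs]
      have e1 : ((2*i+a : ℕ) : ℝ) = 2 * i + a := by push_cast; ring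
      have e2 : ((2*j+b : ℕ) : ℝ) = 2 * j + b := by push_cast; ring
      rw [e1, e2]
      exact ⟨h1, h2⟩
    rcases le_total z.re (x₀ + (2*i) * h + h) with hre | hre <;>
      rcases le_total z.im (y₀ + (2*j) * h + h) with him | him
    · exact Or.inl (Or.inl (key 0 0 (by norm_num) (by norm_num)
        ⟨by push_cast; nlinarith, by push_cast; linarith⟩
        ⟨by push_cast; nlinarith, by push_cast; linarith⟩))
    · exact Or.inl (Or.inr (key 0 1 (by norm_num) (by norm_num)
        ⟨by push_cast; nlinarith, by push_cast; linarith⟩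
        ⟨by push_cast; nlinarith, by push_cast; nlinarith⟩))
    · exact Or.inr (Or.inl (key 1 0 (by norm_num) (by norm_num)
        ⟨by push_cast; nlinarith, by push_cast; nlinarith⟩
        ⟨by push_cast; nlinarith, by push_cast; linarith⟩))
    · exact Or.inr (Or.inr (key 1 1 (by norm_num) (by norm_num)
        ⟨by push_cast; nlinarith, by push_cast; nlinarith⟩
        ⟨by push_cast; nlinarith, by push_cast; nlinarith⟩))
  · apply union_subset <;> apply union_subset
    · have := dyQ_child_subset (x₀ := x₀) (y₀ := y₀) hs₀ (n := n) (i := i) (j := j)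
        (a := 0) (b := 0) (by norm_num) (by norm_num)
      simpa using this
    · have := dyQ_child_subset (x₀ := x₀) (y₀ := y₀) hs₀ (n := n) (i := i) (j := j)
        (a := 0) (b := 1) (by norm_num) (by norm_num)
      simpa using this
    · have := dyQ_child_subset (x₀ := x₀) (y₀ := y₀) hs₀ (n := n) (i := i) (j := j)
        (a := 1) (b := 0) (by norm_num) (by norm_num)
      simpa using this
    · exact dyQ_child_subset hs₀ le_rfl le_rfl

theorem vitali_type_covering_finite
    (x₀ y₀ s₀ : ℝ) (hs₀ : 0 < s₀) (A : Set ℂ) (hA : A.Nonempty) (hAcl : IsClosed A)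
    (hAR : A ⊆ closedSquare x₀ y₀ s₀) (F : Set (Set ℂ))
    (hF : ∀ S ∈ F, (∃ x y s, 0 < s ∧ S = closedSquare x y s) ∧ S ⊆ closedSquare x₀ y₀ s₀)
    (hfine : ∀ a ∈ A, ∃ δ : ℝ, 0 < δ ∧ ∀ x y s : ℝ, 0 < s →
      closedSquare x y s ⊆ closedSquare x₀ y₀ s₀ → a ∈ closedSquare x y s → Metric.diam (closedSquare x y s) < δ →
      closedSquare x y s ∈ F) :
    ∃ G ⊆ F, G.Finite ∧
      (G.Pairwise fun S T => Disjoint (interior S) (interior T)) ∧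
      A ⊆ ⋃₀ G := by
  classical
  set Good : ℕ → ℕ → ℕ → Prop :=
    fun n i j => GoodIn A F (dyQ x₀ y₀ s₀ n i j) (interior (dyQ x₀ y₀ s₀ n i j)) with hGood
  have hQpos : ∀ n : ℕ, (0:ℝ) < s₀ / 2 ^ n := fun n => by positivity
  have hnotF : ∀ n i j, ¬Good n i j → dyQ x₀ y₀ s₀ n i j ∉ F :=
    fun n i j hn h => hn (goodIn_of_mem h)
  have hmeets : ∀ n i j, ¬Good n i j → (A ∩ dyQ x₀ y₀ s₀ n i j).Nonempty := by
    intro n i j hn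
    rw [nonempty_iff_ne_empty]
    exact fun h => hn (goodIn_of_empty h)
  -- find a bad child square
  have step : ∀ n i j, ¬Good n i j →
      ∃ a b, a ≤ 1 ∧ b ≤ 1 ∧ ¬Good (n+1) (2*i+a) (2*j+b) := by
    intro n i j hn
    by_contra hc
    push_neg at hc
    apply hn
    have g00 := hc 0 0 (by norm_num) (by norm_num)
    have g01 := hc 0 1 (by norm_num) (by norm_num)
    have g10 := hc 1 0 (by norm_num) (by norm_num)
    have g11 := hc 1 1 (by norm_num) (by norm_num)
    simp only [Nat.add_zero] at g00 g01 g10 g11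
    have col0 := g00.combine g01 (dyQ_disjoint hs₀ (Or.inr (by omega)))
    have col1 := g10.combine g11 (dyQ_disjoint hs₀ (Or.inr (by omega)))
    have all := col0.combine col1 ?_
    · rw [← dyQ_eq_union hs₀ n i j] at all
      refine all.mono_D ?_
      apply union_subset <;> apply union_subset <;>
        refine interior_mono ?_
      · have := dyQ_child_subset (x₀ := x₀) (y₀ := y₀) hs₀ (n := n) (i := i) (j := j)
          (a := 0) (b := 0) (by norm_num) (by norm_num)
        simpa using this
      · have := dyQ_child_subset (x₀ := x₀) (y₀ := y₀) hs₀ (n := n) (i := i) (j := j)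
          (a := 0) (b := 1) (by norm_num) (by norm_num)
        simpa using this
      · have := dyQ_child_subset (x₀ := x₀) (y₀ := y₀) hs₀ (n := n) (i := i) (j := j)
          (a := 1) (b := 0) (by norm_num) (by norm_num)
        simpa using this
      · exact dyQ_child_subset hs₀ le_rfl le_rfl
    · simp only [disjoint_union_left, disjoint_union_right]
      exact ⟨⟨dyQ_disjoint hs₀ (Or.inl (by omega)), dyQ_disjoint hs₀ (Or.inl (by omega))⟩,
        ⟨dyQ_disjoint hs₀ (Or.inl (by omega)), dyQ_disjoint hs₀ (Or.inl (by omega))⟩⟩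
  -- small levels exist
  have hsmall : ∀ ε : ℝ, 0 < ε → ∃ N : ℕ, 2 * (s₀ / 2 ^ N) < ε := by
    intro ε hε
    obtain ⟨N, hN⟩ := exists_nat_gt (2 * s₀ / ε)
    refine ⟨N, ?_⟩
    have h2N : (N:ℝ) < 2 ^ N := by exact_mod_cast Nat.lt_two_pow_self (n := N)
    have h2N0 : (0:ℝ) < 2 ^ N := by positivity
    rw [div_lt_iff₀ hε] at hN
    rw [show 2 * (s₀ / 2 ^ N) = 2 * s₀ / 2 ^ N by ring, div_lt_iff₀ h2N0]
    nlinarith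
  -- main claim
  have main : Good 0 0 0 := by
    by_contra hbad
    have step' : ∀ n i j, ∃ p : ℕ × ℕ,
        i < 2 ^ n → j < 2 ^ n → ¬Good n i j →
          p.1 < 2 ^ (n+1) ∧ p.2 < 2 ^ (n+1) ∧ ¬Good (n+1) p.1 p.2 ∧
            dyQ x₀ y₀ s₀ (n+1) p.1 p.2 ⊆ dyQ x₀ y₀ s₀ n i j := by
      intro n i j
      by_cases hn : i < 2 ^ n ∧ j < 2 ^ n ∧ ¬Good n i j
      · obtain ⟨a, b, ha, hb, hg⟩ := step n i j hn.2.2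
        refine ⟨(2*i+a, 2*j+b), fun _ _ _ => ⟨?_, ?_, hg, dyQ_child_subset hs₀ ha hb⟩⟩
        · have := hn.1; rw [pow_succ]; omega
        · have := hn.2.1; rw [pow_succ]; omega
      · exact ⟨(0, 0), fun h1 h2 h3 => absurd ⟨h1, h2, h3⟩ hn⟩
    choose nxt hnxt using step'
    let f : ℕ → ℕ × ℕ := fun n => Nat.rec (0, 0) (fun n p => nxt n p.1 p.2) n
    have hfs : ∀ n, f (n+1) = nxt n (f n).1 (f n).2 := fun n => rfl
    have inv : ∀ n, (f n).1 < 2 ^ n ∧ (f n).2 < 2 ^ n ∧ ¬Good n (f n).1 (f n).2 := by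
      intro n
      induction n with
      | zero => exact ⟨Nat.one_pos, Nat.one_pos, hbad⟩
      | succ n ih =>
        rw [hfs]
        have := hnxt n (f n).1 (f n).2 ih.1 ih.2.1 ih.2.2
        exact ⟨this.1, this.2.1, this.2.2.1⟩
    have hsub : ∀ n, dyQ x₀ y₀ s₀ (n+1) (f (n+1)).1 (f (n+1)).2 ⊆ dyQ x₀ y₀ s₀ n (f n).1 (f n).2 := by
      intro n
      rw [hfs]
      exact (hnxt n (f n).1 (f n).2 (inv n).1 (inv n).2.1 (inv n).2.2).2.2.2
    have hnest : ∀ m n, n ≤ m → dyQ x₀ y₀ s₀ m (f m).1 (f m).2 ⊆ dyQ x₀ y₀ s₀ n (f n).1 (f n).2 := by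
      intro m
      induction m with
      | zero => intro n hn; rw [Nat.le_zero.mp hn]
      | succ m ih =>
        intro n hn
        rcases Nat.eq_or_lt_of_le hn with h | h
        · rw [h]
        · exact (hsub m).trans (ih n (Nat.lt_succ_iff.mp h))
    have hAn : ∀ n, ∃ a, a ∈ A ∧ a ∈ dyQ x₀ y₀ s₀ n (f n).1 (f n).2 := fun n => hmeets n _ _ (inv n).2.2
    choose a ha1 ha2 using hAn
    have hcauchy : CauchySeq a := by
      rw [Metric.cauchySeq_iff']
      intro ε hε
      obtain ⟨N, hN⟩ := hsmall ε hε
      exact ⟨N, fun n hn => lt_of_le_of_lt (dist_le_cs (hnest n N hn (ha2 n)) (ha2 N)) hN⟩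
    obtain ⟨z, hz⟩ := cauchySeq_tendsto_of_complete hcauchy
    have hzA : z ∈ A := hAcl.mem_of_tendsto hz (Filter.Eventually.of_forall ha1)
    have hzQ : ∀ n, z ∈ dyQ x₀ y₀ s₀ n (f n).1 (f n).2 := fun n =>
      (isClosed_cs _ _ _).mem_of_tendsto hz
        (Filter.eventually_atTop.mpr ⟨n, fun m hm => hnest m n hm (ha2 m)⟩)
    obtain ⟨δ, hδ, hδF⟩ := hfine z hzA
    obtain ⟨N, hN⟩ := hsmall δ hδ
    have hmem : dyQ x₀ y₀ s₀ N (f N).1 (f N).2 ∈ F :=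
      hδF _ _ _ (hQpos N) (dyQ_subset hs₀ (inv N).1 (inv N).2.1) (hzQ N)
        (lt_of_le_of_lt (diam_cs_le (hQpos N).le _ _) hN)
    exact hnotF N _ _ (inv N).2.2 hmem
  obtain ⟨G, hGF, hfin, hpw, hcov, -⟩ := main
  have hQ0 : dyQ x₀ y₀ s₀ 0 0 0 = closedSquare x₀ y₀ s₀ := by
    simp [dyQ]
  refine ⟨G, hGF, hfin, hpw, fun z hz => hcov ⟨hz, ?_⟩⟩
  rw [hQ0]
  exact hAR hz
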